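/- arXiv:2006.07442 — 3 statements merged into one kernel-verified Lean document; each statement's English description precedes it below -/
import Mathlib

section
/- In the maximum-entropy RL setting with entropy weight c > 0, for any policies μ and π and any n ≥ 1, the optimal soft Q-function satisfies Q_ent^{π*_ent}(x₀,a₀) ≥ E_μ[r₀ + γc·H^μ(x₁) + Σ_{t=1}^{n-1} γ^t (r_t + c·H^μ(x_{t+1})) + γ^n Q_ent^π(x_n,a_n)], where H^μ(x) is the entropy of μ(·|x). -/
open Finset

def IsPolicy {X A : Type*} [Fintype A] (π : X → A → ℝ) : Prop :=
  (∀ x a, 0 ≤ π x a) ∧ ∀ x, ∑ a, π x a = 1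

def IsKernel {X A : Type*} [Fintype X] (p : X → A → X → ℝ) : Prop :=
  (∀ x a x', 0 ≤ p x a x') ∧ ∀ x a, ∑ x', p x a x' = 1

/-- Shannon entropy H^π(x) of the action distribution π(·|x). -/
noncomputable def ent {X A : Type*} [Fintype A] (π : X → A → ℝ) (x : X) : ℝ :=
  ∑ a, Real.negMulLog (π x a)

/-- Entropy-regularized ("soft") Bellman evaluation operator for policy π with
entropy weight c. -/
noncomputable def softBellman {X A : Type*} [Fintype X] [Fintype A]
    (p : X → A → X → ℝ) (r : X → A → ℝ) (γ c : ℝ) (π : X → A → ℝ)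
    (Q : X → A → ℝ) : X → A → ℝ :=
  fun x a => r x a + γ * ∑ x', p x a x' * (c * ent π x' + ∑ a', π x' a' * Q x' a')

/-- `Q` is the entropy-regularized Q-function of policy `π`:
`Q^π_ent(x₀,a₀) = E_π[r₀ + ∑_{t≥1} γ^t (r_t + c H^π(x_t))]`. -/
def IsSoftQFun {X A : Type*} [Fintype X] [Fintype A] (p : X → A → X → ℝ)
    (r : X → A → ℝ) (γ c : ℝ) (π : X → A → ℝ) (Q : X → A → ℝ) : Prop :=
  ∀ x a, Q x a = softBellman p r γ c π Q x a

/-- `Q` is the optimal soft Q-function, i.e. satisfies the soft Bellman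
optimality equation (log-sum-exp backup). -/
def IsSoftOptQ {X A : Type*} [Fintype X] [Fintype A] (p : X → A → X → ℝ)
    (r : X → A → ℝ) (γ c : ℝ) (Q : X → A → ℝ) : Prop :=
  ∀ x a, Q x a = r x a + γ * ∑ x', p x a x' *
    (c * Real.log (∑ a', Real.exp (Q x' a' / c)))


lemma gibbs {A : Type*} [Fintype A] [Nonempty A] {c : ℝ} (hc : 0 < c)
    (w Q : A → ℝ) (hw0 : ∀ a, 0 ≤ w a) (hw1 : ∑ a, w a = 1) :
    c * (∑ a, Real.negMulLog (w a)) + ∑ a, w a * Q a ≤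
      c * Real.log (∑ a, Real.exp (Q a / c)) := by
  set S := ∑ a, Real.exp (Q a / c) with hS
  have hSpos : 0 < S := Finset.sum_pos (fun a _ => Real.exp_pos _) univ_nonempty
  have key : ∀ a : A, c * Real.negMulLog (w a) + w a * Q a ≤
      c * (Real.exp (Q a / c) / S) + c * (w a * Real.log S) - c * w a := by
    intro a
    rcases eq_or_lt_of_le (hw0 a) with h0 | hpos
    · rw [← h0]
      simp [Real.negMulLog_zero]
      positivity
    · have hlog := Real.log_le_sub_one_of_pos
        (show 0 < Real.exp (Q a / c) / (w a * S) by positivity)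
      rw [Real.log_div (Real.exp_ne_zero _) (by positivity), Real.log_exp,
        Real.log_mul (ne_of_gt hpos) (ne_of_gt hSpos)] at hlog
      have h3 : w a * (Real.exp (Q a / c) / (w a * S)) = Real.exp (Q a / c) / S := by
        field_simp
      have h2 : w a * (Q a / c) - w a * Real.log (w a) - w a * Real.log S ≤
          Real.exp (Q a / c) / S - w a := by
        have h := mul_le_mul_of_nonneg_left hlog hpos.le
        nlinarith [h3]
      have h4 : c * (w a * (Q a / c)) = w a * Q a := by
        field_simp
      rw [Real.negMulLog]
      nlinarith [mul_le_mul_of_nonneg_left h2 hc.le, h4]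
  calc c * (∑ a, Real.negMulLog (w a)) + ∑ a, w a * Q a
      = ∑ a, (c * Real.negMulLog (w a) + w a * Q a) := by
        rw [Finset.sum_add_distrib, Finset.mul_sum]
    _ ≤ ∑ a, (c * (Real.exp (Q a / c) / S) + c * (w a * Real.log S) - c * w a) :=
        Finset.sum_le_sum (fun a _ => key a)
    _ = c * Real.log S := by
        rw [Finset.sum_sub_distrib, Finset.sum_add_distrib, ← Finset.mul_sum,
          ← Finset.mul_sum, ← Finset.mul_sum, ← Finset.sum_div, ← hS, div_self (ne_of_gt hSpos)]
        rw [← Finset.sum_mul, hw1]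
        ring

lemma step_le_opt {X A : Type*} [Fintype X] [Fintype A] [Nonempty A]
    (p : X → A → X → ℝ) (r : X → A → ℝ) (γ c : ℝ)
    (hγ₀ : 0 < γ) (hc : 0 < c) (hp : IsKernel p)
    (μ : X → A → ℝ) (hμ : IsPolicy μ)
    (Qstar : X → A → ℝ) (hQstar : IsSoftOptQ p r γ c Qstar)
    (Q : X → A → ℝ) (hQ : ∀ x a, Q x a ≤ Qstar x a) :
    ∀ x a, softBellman p r γ c μ Q x a ≤ Qstar x a := by
  intro x a
  rw [hQstar x a]
  unfold softBellman
  apply add_le_add_right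
  apply mul_le_mul_of_nonneg_left _ hγ₀.le
  apply Finset.sum_le_sum
  intro x' _
  apply mul_le_mul_of_nonneg_left _ (hp.1 x a x')
  calc c * ent μ x' + ∑ a', μ x' a' * Q x' a'
      ≤ c * ent μ x' + ∑ a', μ x' a' * Qstar x' a' := by
        apply add_le_add_right
        exact Finset.sum_le_sum fun a' _ =>
          mul_le_mul_of_nonneg_left (hQ x' a') (hμ.1 x' a')
    _ ≤ c * Real.log (∑ a', Real.exp (Qstar x' a' / c)) :=
        gibbs hc (μ x') (Qstar x') (hμ.1 x') (hμ.2 x')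

lemma Qpi_le_Qstar {X A : Type*} [Fintype X] [Fintype A] [Nonempty X] [Nonempty A]
    (p : X → A → X → ℝ) (r : X → A → ℝ) (γ c : ℝ)
    (hγ₀ : 0 < γ) (hγ₁ : γ < 1) (hc : 0 < c) (hp : IsKernel p)
    (π : X → A → ℝ) (hπ : IsPolicy π)
    (Qπ Qstar : X → A → ℝ)
    (hQπ : IsSoftQFun p r γ c π Qπ)
    (hQstar : IsSoftOptQ p r γ c Qstar) :
    ∀ x a, Qπ x a ≤ Qstar x a := by
  obtain ⟨⟨x₁, a₁⟩, hmax⟩ :=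
    Finite.exists_max (fun q : X × A => Qπ q.1 q.2 - Qstar q.1 q.2)
  set M : ℝ := Qπ x₁ a₁ - Qstar x₁ a₁ with hM
  have hMγ : M ≤ γ * M := by
    have h1 : Qπ x₁ a₁ - Qstar x₁ a₁ =
        γ * ∑ x', p x₁ a₁ x' * ((c * ent π x' + ∑ a', π x' a' * Qπ x' a')
          - c * Real.log (∑ a', Real.exp (Qstar x' a' / c))) := by
      rw [hQπ x₁ a₁, hQstar x₁ a₁]
      simp only [softBellman, mul_sub, Finset.sum_sub_distrib, Finset.mul_sum]
      ring
    have h2 : ∑ x', p x₁ a₁ x' * ((c * ent π x' + ∑ a', π x' a' * Qπ x' a')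
        - c * Real.log (∑ a', Real.exp (Qstar x' a' / c))) ≤ M := by
      calc ∑ x', p x₁ a₁ x' * ((c * ent π x' + ∑ a', π x' a' * Qπ x' a')
            - c * Real.log (∑ a', Real.exp (Qstar x' a' / c)))
          ≤ ∑ x' : X, p x₁ a₁ x' * M := by
            apply Finset.sum_le_sum
            intro x' _
            apply mul_le_mul_of_nonneg_left _ (hp.1 x₁ a₁ x')
            have hg := gibbs hc (π x') (Qstar x') (hπ.1 x') (hπ.2 x')
            have h3 : ∑ a', π x' a' * Qπ x' a' - ∑ a', π x' a' * Qstar x' a' ≤ M := by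
              rw [← Finset.sum_sub_distrib]
              calc ∑ a', (π x' a' * Qπ x' a' - π x' a' * Qstar x' a')
                  = ∑ a', π x' a' * (Qπ x' a' - Qstar x' a') := by
                    apply Finset.sum_congr rfl; intro a' _; ring
                _ ≤ ∑ a' : A, π x' a' * M :=
                    Finset.sum_le_sum fun a' _ =>
                      mul_le_mul_of_nonneg_left (hmax (x', a')) (hπ.1 x' a')
                _ = M := by rw [← Finset.sum_mul, hπ.2 x', one_mul]
            simp only [ent]
            linarith
        _ = M := by rw [← Finset.sum_mul, hp.2 x₁ a₁, one_mul]
    calc M = γ * ∑ x', p x₁ a₁ x' * ((c * ent π x' + ∑ a', π x' a' * Qπ x' a')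
          - c * Real.log (∑ a', Real.exp (Qstar x' a' / c))) := by rw [hM, h1]
      _ ≤ γ * M := mul_le_mul_of_nonneg_left h2 hγ₀.le
  have hM0 : M ≤ 0 := by nlinarith
  intro x a
  have := hmax (x, a)
  simp only [← hM] at this
  linarith

/-- Generalized n-step lower bound in maximum-entropy RL: for any policies μ, π
and any n ≥ 1, the optimal soft Q-function satisfies
`Q_ent^{π*}(x₀,a₀) ≥ E_μ[r₀ + γc H^μ(x₁) + ∑_{t=1}^{n-1} γ^t (r_t + c H^μ(x_{t+1}))
+ γ^n Q_ent^π(x_n,a_n)]`; this expectation is the n-fold application of the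
soft μ-Bellman operator to Q_ent^π. -/
theorem maxent_nstep_lower_bound {X A : Type*} [Fintype X] [Fintype A] [Nonempty A]
    (p : X → A → X → ℝ) (r : X → A → ℝ) (γ c : ℝ)
    (hγ₀ : 0 < γ) (hγ₁ : γ < 1) (hc : 0 < c)
    (hp : IsKernel p)
    (μ π : X → A → ℝ) (hμ : IsPolicy μ) (hπ : IsPolicy π)
    (Qπ Qstar : X → A → ℝ)
    (hQπ : IsSoftQFun p r γ c π Qπ)
    (hQstar : IsSoftOptQ p r γ c Qstar)
    (n : ℕ) (hn : 1 ≤ n) (x₀ : X) (a₀ : A) :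
    (softBellman p r γ c μ)^[n] Qπ x₀ a₀ ≤ Qstar x₀ a₀ := by
  haveI : Nonempty X := ⟨x₀⟩
  have main : ∀ m, ∀ x a, (softBellman p r γ c μ)^[m] Qπ x a ≤ Qstar x a := by
    intro m
    induction m with
    | zero =>
        simpa using Qpi_le_Qstar p r γ c hγ₀ hγ₁ hc hp π hπ Qπ Qstar hQπ hQstar
    | succ k ih =>
        intro x a
        rw [Function.iterate_succ_apply']
        exact step_le_opt p r γ c hγ₀ hc hp μ hμ Qstar hQstar _ ih x a
  exact main n x₀ a₀
end

section
/- For γ ∈ (0,1), n ≥ 2 and β ∈ (0,1), if α > (1−γ)/(1−γⁿ) then (1−β)γ + (1−α)β + αβγⁿ < γ; i.e., the mixed operator contracts strictly faster than γ. -/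
/-- For γ ∈ (0,1), n ≥ 2, β ∈ (0,1) and α ∈ [0,1] with α > (1−γ)/(1−γⁿ),
the contraction-rate bound drops strictly below γ:
`(1−β)γ + (1−α)β + αβγⁿ < γ`. -/
theorem mix_rate_below_gamma (γ : ℝ) (hγ₀ : 0 < γ) (hγ₁ : γ < 1)
    (n : ℕ) (hn : 2 ≤ n)
    (β : ℝ) (hβ₀ : 0 < β) (hβ₁ : β < 1)
    (α : ℝ) (hα₀ : 0 ≤ α) (hα₁ : α ≤ 1)
    (hα : (1 - γ) / (1 - γ ^ n) < α) :
    (1 - β) * γ + (1 - α) * β + α * β * γ ^ n < γ := by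
  have hpow : γ ^ n < 1 := pow_lt_one₀ hγ₀.le hγ₁ (by omega)
  have h1 : (0:ℝ) < 1 - γ ^ n := by linarith
  have key : 1 - γ < α * (1 - γ ^ n) := by
    have := (div_lt_iff₀ h1).mp hα
    linarith
  nlinarith [key, hβ₀]
end

section
/- The fixed point Q̃^{α,β} of T^{α,β}_{n,sil} satisfies Q̃^{α,β} ≤ Q* pointwise, where Q* is the optimal Q-function. -/
open Finset

/-- Bellman evaluation operator T^π. -/
def bellman {X A : Type*} [Fintype X] [Fintype A] (p : X → A → X → ℝ)
    (r : X → A → ℝ) (γ : ℝ) (π : X → A → ℝ) (Q : X → A → ℝ) : X → A → ℝ :=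
  fun x a => r x a + γ * ∑ x', p x a x' * ∑ a', π x' a' * Q x' a'

/-- The uncorrected n-step operator U = (T^μ)^{n-1} T^π. -/
def nstepOp {X A : Type*} [Fintype X] [Fintype A] (p : X → A → X → ℝ)
    (r : X → A → ℝ) (γ : ℝ) (μ π : X → A → ℝ) (n : ℕ) (Q : X → A → ℝ) : X → A → ℝ :=
  (bellman p r γ μ)^[n - 1] (bellman p r γ π Q)

/-- The n-step SIL operator `T_{n,sil}Q = Q + [UQ − Q]₊`. -/
def silOp {X A : Type*} [Fintype X] [Fintype A] (p : X → A → X → ℝ)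
    (r : X → A → ℝ) (γ : ℝ) (μ π : X → A → ℝ) (n : ℕ) (Q : X → A → ℝ) : X → A → ℝ :=
  fun x a => Q x a + max (nstepOp p r γ μ π n Q x a - Q x a) 0

/-- The mixed operator `T^{α,β}_{n,sil} = (1−β)T^π + (1−α)β T_{n,sil} + αβ (T^μ)^{n-1}T^π`. -/
def mixOp {X A : Type*} [Fintype X] [Fintype A] (p : X → A → X → ℝ)
    (r : X → A → ℝ) (γ : ℝ) (μ π : X → A → ℝ) (n : ℕ) (α β : ℝ)
    (Q : X → A → ℝ) : X → A → ℝ :=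
  fun x a => (1 - β) * bellman p r γ π Q x a + (1 - α) * β * silOp p r γ μ π n Q x a
    + α * β * nstepOp p r γ μ π n Q x a

/-- Bellman optimality operator T*. -/
noncomputable def bellmanOpt {X A : Type*} [Fintype X] [Fintype A]
    (p : X → A → X → ℝ) (r : X → A → ℝ) (γ : ℝ) (Q : X → A → ℝ) : X → A → ℝ :=
  fun x a => r x a + γ * ∑ x', p x a x' * ⨆ a', Q x' a'

lemma bellman_le_bound {X A : Type*} [Fintype X] [Fintype A] [Nonempty A]
    (p : X → A → X → ℝ) (r : X → A → ℝ) (γ : ℝ)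
    (hγ₀ : 0 ≤ γ) (hp : IsKernel p) (ρ : X → A → ℝ) (hρ : IsPolicy ρ)
    (Qstar Q : X → A → ℝ) (M : ℝ)
    (hQ : ∀ x a, Q x a ≤ Qstar x a + M) :
    ∀ x a, bellman p r γ ρ Q x a ≤ bellmanOpt p r γ Qstar x a + γ * M := by
  intro x a
  have key : ∀ x', ∑ a', ρ x' a' * Q x' a' ≤ (⨆ a', Qstar x' a') + M := by
    intro x'
    calc ∑ a', ρ x' a' * Q x' a'
        ≤ ∑ a', ρ x' a' * ((⨆ a'', Qstar x' a'') + M) := by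
          apply Finset.sum_le_sum; intro a' _
          refine mul_le_mul_of_nonneg_left ?_ (hρ.1 x' a')
          refine le_trans (hQ x' a') ?_
          gcongr
          exact le_ciSup (Set.Finite.bddAbove (Set.finite_range _)) a'
      _ = (⨆ a'', Qstar x' a'') + M := by
          rw [← Finset.sum_mul, hρ.2 x', one_mul]
  have hs : ∑ x', p x a x' * ∑ a', ρ x' a' * Q x' a'
      ≤ ∑ x', p x a x' * ((⨆ a', Qstar x' a') + M) := by
    apply Finset.sum_le_sum; intro x' _
    exact mul_le_mul_of_nonneg_left (key x') (hp.1 x a x')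
  have h2 : ∑ x', p x a x' * ((⨆ a', Qstar x' a') + M)
      = (∑ x', p x a x' * ⨆ a', Qstar x' a') + M := by
    simp [mul_add, Finset.sum_add_distrib, ← Finset.sum_mul, hp.2 x a]
  have := mul_le_mul_of_nonneg_left (hs.trans_eq h2) hγ₀
  simp only [bellman, bellmanOpt]
  linarith

/-- The fixed point Q̃^{α,β} of the mixed SIL operator is upper bounded by the
optimal Q-function: Q̃^{α,β} ≤ Q* pointwise. -/
theorem mixOp_fixed_point_le_optimal {X A : Type*} [Fintype X] [Fintype A] [Nonempty A]
    (p : X → A → X → ℝ) (r : X → A → ℝ) (γ : ℝ) (hγ₀ : 0 < γ) (hγ₁ : γ < 1)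
    (hp : IsKernel p)
    (μ π : X → A → ℝ) (hμ : IsPolicy μ) (hπ : IsPolicy π)
    (n : ℕ) (hn : 1 ≤ n)
    (α β : ℝ) (hα₀ : 0 ≤ α) (hα₁ : α ≤ 1) (hβ₀ : 0 ≤ β) (hβ₁ : β < 1)
    (Qt : X → A → ℝ) (hfix : mixOp p r γ μ π n α β Qt = Qt)
    (Qstar : X → A → ℝ) (hQstar : bellmanOpt p r γ Qstar = Qstar) :
    ∀ x a, Qt x a ≤ Qstar x a := by
  intro x a
  have hXA : (Finset.univ : Finset (X × A)).Nonempty := ⟨(x, a), Finset.mem_univ _⟩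
  set f : X × A → ℝ := fun q => Qt q.1 q.2 - Qstar q.1 q.2 with hf
  set M : ℝ := Finset.sup' Finset.univ hXA f with hMdef
  have hle : ∀ y b, Qt y b ≤ Qstar y b + M := by
    intro y b
    have := Finset.le_sup' f (Finset.mem_univ (y, b))
    simp only [hf] at this
    linarith
  rcases le_or_gt M 0 with hM0 | hM0
  · have := hle x a; linarith
  · exfalso
    have hγM : 0 ≤ γ * M := by positivity
    -- T^π Qt ≤ Q* + γM
    have hTπ : ∀ y b, bellman p r γ π Qt y b ≤ Qstar y b + γ * M := by
      intro y b
      have := bellman_le_bound p r γ hγ₀.le hp π hπ Qstar Qt M hle y b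
      rw [hQstar] at this; exact this
    -- iterated bound for the n-step operator
    have hU : ∀ k, ∀ y b,
        (bellman p r γ μ)^[k] (bellman p r γ π Qt) y b ≤ Qstar y b + γ * M := by
      intro k
      induction k with
      | zero => simpa using hTπ
      | succ k ih =>
        intro y b
        rw [Function.iterate_succ_apply']
        have := bellman_le_bound p r γ hγ₀.le hp μ hμ Qstar
          ((bellman p r γ μ)^[k] (bellman p r γ π Qt)) (γ * M)
          (by intro y' b'; exact ih y' b') y b
        rw [hQstar] at this
        nlinarith
    have hUn : ∀ y b, nstepOp p r γ μ π n Qt y b ≤ Qstar y b + γ * M := by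
      intro y b; exact hU (n - 1) y b
    -- SIL operator bound
    have hsil : ∀ y b, silOp p r γ μ π n Qt y b ≤ Qstar y b + M := by
      intro y b
      unfold silOp
      rcases le_total (nstepOp p r γ μ π n Qt y b) (Qt y b) with h | h
      · rw [max_eq_right (by linarith)]
        have := hle y b; linarith
      · rw [max_eq_left (by linarith)]
        have := hUn y b; nlinarith
    -- evaluate at the maximizing pair
    obtain ⟨q, -, hq⟩ := Finset.exists_mem_eq_sup' hXA f
    have hqM : Qt q.1 q.2 - Qstar q.1 q.2 = M := by rw [hMdef, hq]
    have hfixq : mixOp p r γ μ π n α β Qt q.1 q.2 = Qt q.1 q.2 := by rw [hfix]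
    have h1 : (1 - β) * bellman p r γ π Qt q.1 q.2
        ≤ (1 - β) * (Qstar q.1 q.2 + γ * M) :=
      mul_le_mul_of_nonneg_left (hTπ q.1 q.2) (by linarith)
    have h2 : (1 - α) * β * silOp p r γ μ π n Qt q.1 q.2
        ≤ (1 - α) * β * (Qstar q.1 q.2 + M) :=
      mul_le_mul_of_nonneg_left (hsil q.1 q.2) (by nlinarith)
    have h3 : α * β * nstepOp p r γ μ π n Qt q.1 q.2
        ≤ α * β * (Qstar q.1 q.2 + γ * M) :=
      mul_le_mul_of_nonneg_left (hUn q.1 q.2) (by positivity)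
    have hmix : Qt q.1 q.2 ≤ Qstar q.1 q.2
        + ((1 - β) * γ + (1 - α) * β + α * β * γ) * M := by
      rw [← hfixq]; unfold mixOp; nlinarith
    -- contradiction: M ≤ cM with c < 1
    nlinarith [mul_pos hM0 (mul_pos (sub_pos.2 hγ₁)
      (by nlinarith : (0:ℝ) < 1 - β * (1 - α)))]
end
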